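/- Let E be a finite set and for each e ∈ E let a0(e), aσ(e), aτ(e), aστ(e) ≥ 0 with a0(e)+aσ(e)+aτ(e)+aστ(e) = 1, and let c : E → {>, <} be a classification such that aστ(e)a0(e) ≥ aσ(e)aτ(e) whenever c(e) = > and aσ(e)aτ(e) ≥ aστ(e)a0(e) whenever c(e) = <. Then the product probability measure λ(n) = ∏_{e∈E} a_{n(e)}(e) on configurations n : E → {0,1}² (with a_{(0,0)}=a0, a_{(1,0)}=aσ, a_{(0,1)}=aτ, a_{(1,1)}=aστ) satisfies the lattice condition λ(n ∨ n')·λ(n ∧ n') ≥ λ(n)·λ(n') for all configurations n, n', and consequently λ(f·g) ≥ λ(f)·λ(g) for all functions f, g that are increasing with respect to the order ≼; i.e. λ is FKG. -/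
import Mathlib


/-- The weight of an edge state: `(0,0) ↦ a0`, `(1,0) ↦ aσ`, `(0,1) ↦ aτ`, `(1,1) ↦ aστ`. -/
def wt (a0 aσ aτ aστ : ℝ) : Bool × Bool → ℝ
  | (false, false) => a0
  | (true, false) => aσ
  | (false, true) => aτ
  | (true, true) => aστ

/-- The per-edge partial order: for class `>` (`c = true`) the product order on
`{0,1}²`; for class `<` (`c = false`) the order with bottom `(0,1)`, top `(1,0)` and
incomparable middle elements `(0,0)`, `(1,1)`. -/
def edgeLe (c : Bool) (x y : Bool × Bool) : Prop :=
  x.1 ≤ y.1 ∧ (if c then x.2 ≤ y.2 else y.2 ≤ x.2)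

/-- The componentwise partial order `≼` on configurations. -/
def confLe {E : Type*} (c : E → Bool) (n n' : E → Bool × Bool) : Prop :=
  ∀ e, edgeLe (c e) (n e) (n' e)

/-- The per-edge join for the order `edgeLe c`. -/
def edgeSup (c : Bool) (x y : Bool × Bool) : Bool × Bool :=
  (x.1 || y.1, if c then x.2 || y.2 else x.2 && y.2)

/-- The per-edge meet for the order `edgeLe c`. -/
def edgeInf (c : Bool) (x y : Bool × Bool) : Bool × Bool :=
  (x.1 && y.1, if c then x.2 && y.2 else x.2 || y.2)

namespace Stmt14Aux

instance (c : Bool) (x y : Bool × Bool) : Decidable (edgeLe c x y) := by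
  unfold edgeLe; infer_instance

def eflip (cb : Bool) (x : Bool × Bool) : Bool × Bool :=
  (x.1, if cb then x.2 else !x.2)

lemma eflip_invol : ∀ cb x, eflip cb (eflip cb x) = x := by decide
lemma eflip_le : ∀ cb x y, (edgeLe cb (eflip cb x) (eflip cb y) ↔ x ≤ y) := by decide
lemma eflip_sup : ∀ cb x y, edgeSup cb (eflip cb x) (eflip cb y) = eflip cb (x ⊔ y) := by decide
lemma eflip_inf : ∀ cb x y, edgeInf cb (eflip cb x) (eflip cb y) = eflip cb (x ⊓ y) := by decide

lemma edge_key (a0 aσ aτ aστ : ℝ) (h0 : 0 ≤ a0) (h1 : 0 ≤ aσ) (h2 : 0 ≤ aτ) (h3 : 0 ≤ aστ)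
    (cb : Bool) (hc : if cb then aστ * a0 ≥ aσ * aτ else aσ * aτ ≥ aστ * a0)
    (x y : Bool × Bool) :
    wt a0 aσ aτ aστ x * wt a0 aσ aτ aστ y ≤
      wt a0 aσ aτ aστ (edgeInf cb x y) * wt a0 aσ aτ aστ (edgeSup cb x y) := by
  rcases x with ⟨x1, x2⟩; rcases y with ⟨y1, y2⟩
  rcases cb <;> simp at hc <;>
    rcases x1 <;> rcases x2 <;> rcases y1 <;> rcases y2 <;>
    simp [wt, edgeSup, edgeInf] <;> nlinarith

end Stmt14Aux

open Stmt14Aux in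
/-- the generalized percolation (product) measure satisfies the FKG lattice
condition and hence the FKG inequality for functions increasing w.r.t. `≼`. -/
theorem stmt14 {E : Type*} [Fintype E] [DecidableEq E]
    (a0 aσ aτ aστ : E → ℝ) (c : E → Bool)
    (hpos : ∀ e x, 0 ≤ wt (a0 e) (aσ e) (aτ e) (aστ e) x)
    (hsum : ∀ e, a0 e + aσ e + aτ e + aστ e = 1)
    (hc : ∀ e, if c e then aστ e * a0 e ≥ aσ e * aτ e else aσ e * aτ e ≥ aστ e * a0 e) :
    (∀ n n' : E → Bool × Bool,
      (∏ e, wt (a0 e) (aσ e) (aτ e) (aστ e) (edgeSup (c e) (n e) (n' e))) *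
        (∏ e, wt (a0 e) (aσ e) (aτ e) (aστ e) (edgeInf (c e) (n e) (n' e))) ≥
      (∏ e, wt (a0 e) (aσ e) (aτ e) (aστ e) (n e)) *
        (∏ e, wt (a0 e) (aσ e) (aτ e) (aστ e) (n' e))) ∧
    (∀ f g : (E → Bool × Bool) → ℝ,
      (∀ n n', confLe c n n' → f n ≤ f n') →
      (∀ n n', confLe c n n' → g n ≤ g n') →
      (∑ n : E → Bool × Bool, f n * g n * ∏ e, wt (a0 e) (aσ e) (aτ e) (aστ e) (n e)) ≥
        (∑ n : E → Bool × Bool, f n * ∏ e, wt (a0 e) (aσ e) (aτ e) (aστ e) (n e)) *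
        (∑ n : E → Bool × Bool, g n * ∏ e, wt (a0 e) (aσ e) (aτ e) (aστ e) (n e))) := by
  set W : (E → Bool × Bool) → ℝ := fun n => ∏ e, wt (a0 e) (aσ e) (aτ e) (aστ e) (n e) with hW
  -- weights nonneg
  have hWpos : ∀ n, 0 ≤ W n := fun n => Finset.prod_nonneg fun e _ => hpos e (n e)
  have hpe : ∀ e, 0 ≤ a0 e ∧ 0 ≤ aσ e ∧ 0 ≤ aτ e ∧ 0 ≤ aστ e := fun e =>
    ⟨hpos e (false, false), hpos e (true, false), hpos e (false, true), hpos e (true, true)⟩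
  -- the lattice condition (first conjunct), stated with ≤
  have key : ∀ n n' : E → Bool × Bool,
      W n * W n' ≤ (fun m => ∏ e, wt (a0 e) (aσ e) (aτ e) (aστ e) (edgeInf (c e) (n e) (n' e))) n *
        ∏ e, wt (a0 e) (aσ e) (aτ e) (aστ e) (edgeSup (c e) (n e) (n' e)) := by
    intro n n'
    simp only [hW, ← Finset.prod_mul_distrib]
    refine Finset.prod_le_prod (fun e _ => mul_nonneg (hpos e _) (hpos e _)) fun e _ => ?_
    exact edge_key _ _ _ _ (hpe e).1 (hpe e).2.1 (hpe e).2.2.1 (hpe e).2.2.2 (c e) (hc e) _ _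
  constructor
  · intro n n'
    have := key n n'
    simp only [ge_iff_le]
    calc W n * W n' ≤ _ := key n n'
      _ = _ := by ring
  · intro f g hf hg
    -- flip map and its properties
    set F : (E → Bool × Bool) → (E → Bool × Bool) := fun m e => eflip (c e) (m e) with hF
    have hFinv : Function.Involutive F := by
      intro m; funext e; exact eflip_invol (c e) (m e)
    have hFle : ∀ m m' : E → Bool × Bool, confLe c (F m) (F m') ↔ m ≤ m' := by
      intro m m'
      constructor
      · intro h e; exact (eflip_le (c e) (m e) (m' e)).1 (h e)
      · intro h e; exact (eflip_le (c e) (m e) (m' e)).2 (h e)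
    set μ : (E → Bool × Bool) → ℝ := fun m => W (F m) with hμ
    have hμ0 : 0 ≤ μ := fun m => hWpos (F m)
    -- lattice condition for μ
    have hμlat : ∀ m m', μ m * μ m' ≤ μ (m ⊓ m') * μ (m ⊔ m') := by
      intro m m'
      have h1 : F (m ⊓ m') = fun e => edgeInf (c e) (F m e) (F m' e) := by
        funext e; exact (eflip_inf (c e) (m e) (m' e)).symm
      have h2 : F (m ⊔ m') = fun e => edgeSup (c e) (F m e) (F m' e) := by
        funext e; exact (eflip_sup (c e) (m e) (m' e)).symm
      have := key (F m) (F m')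
      simpa [hμ, hW, h1, h2] using this
    -- baseline values to make f, g nonnegative
    set n0 : E → Bool × Bool := F ⊥ with hn0
    have hf0 : ∀ m, 0 ≤ f (F m) - f n0 := by
      intro m; have : confLe c (F ⊥) (F m) := (hFle ⊥ m).2 bot_le
      simpa [hn0] using sub_nonneg.2 (hf _ _ this)
    have hg0 : ∀ m, 0 ≤ g (F m) - g n0 := by
      intro m; have : confLe c (F ⊥) (F m) := (hFle ⊥ m).2 bot_le
      simpa [hn0] using sub_nonneg.2 (hg _ _ this)
    have hfmono : Monotone (fun m => f (F m) - f n0) := by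
      intro m m' h; have := hf _ _ ((hFle m m').2 h); dsimp only; linarith
    have hgmono : Monotone (fun m => g (F m) - g n0) := by
      intro m m' h; have := hg _ _ ((hFle m m').2 h); dsimp only; linarith
    -- FKG from mathlib
    have hFKG := fkg (fun m => f (F m) - f n0) (fun m => g (F m) - g n0) μ
      hμ0 (fun m => hf0 m) (fun m => hg0 m) hfmono hgmono hμlat
    -- total mass is 1
    have htot : ∑ n : E → Bool × Bool, W n = 1 := by
      rw [hW, ← Fintype.prod_sum]
      refine Finset.prod_eq_one fun e _ => ?_
      rw [Fintype.sum_prod_type]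
      simp [wt, Fintype.sum_bool]
      linarith [hsum e]
    -- reindexing along the involution F
    have hre : ∀ h : (E → Bool × Bool) → ℝ, ∑ m, h (F m) = ∑ n, h n := by
      intro h
      exact Fintype.sum_equiv hFinv.toPerm _ _ (fun m => rfl)
    have hμtot : ∑ m, μ m = 1 := by rw [hμ]; rw [hre W]; exact htot
    set A := ∑ n, f n * W n with hA
    set B := ∑ n, g n * W n with hB
    set C := ∑ n, f n * g n * W n with hC
    have e1 : ∑ m, μ m * (f (F m) - f n0) = A - f n0 := by
      have : ∑ m, μ m * (f (F m) - f n0) = ∑ n, W n * (f n - f n0) :=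
        hre (fun n => W n * (f n - f n0))
      rw [this]
      simp only [mul_sub, Finset.sum_sub_distrib, ← Finset.sum_mul, htot, hA]
      rw [Finset.sum_congr rfl fun n _ => mul_comm (W n) (f n)]
      ring
    have e2 : ∑ m, μ m * (g (F m) - g n0) = B - g n0 := by
      have : ∑ m, μ m * (g (F m) - g n0) = ∑ n, W n * (g n - g n0) :=
        hre (fun n => W n * (g n - g n0))
      rw [this]
      simp only [mul_sub, Finset.sum_sub_distrib, ← Finset.sum_mul, htot, hB]
      rw [Finset.sum_congr rfl fun n _ => mul_comm (W n) (g n)]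
      ring
    have e3 : ∑ m, μ m * ((f (F m) - f n0) * (g (F m) - g n0)) =
        C - f n0 * B - g n0 * A + f n0 * g n0 := by
      have : ∑ m, μ m * ((f (F m) - f n0) * (g (F m) - g n0)) =
          ∑ n, W n * ((f n - f n0) * (g n - g n0)) :=
        hre (fun n => W n * ((f n - f n0) * (g n - g n0)))
      rw [this]
      have expand : ∀ n, W n * ((f n - f n0) * (g n - g n0)) =
          f n * g n * W n - f n0 * (g n * W n) - g n0 * (f n * W n) + f n0 * g n0 * W n := by
        intro n; ring
      rw [Finset.sum_congr rfl fun n _ => expand n]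
      simp only [Finset.sum_add_distrib, Finset.sum_sub_distrib, ← Finset.mul_sum, htot, hA, hB, hC]
      ring
    rw [e1, e2, e3, hμtot, one_mul] at hFKG
    have : A * B ≤ C := by nlinarith [hFKG]
    simpa [ge_iff_le, hA, hB, hC] using this
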